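/- arXiv:2002.08656 — 5 statements merged into one kernel-verified Lean document; each statement's English description precedes it below -/
import Mathlib

section
/- Let d ≥ 1 and let E ⊆ ℝ^d satisfy the interior thickness condition in ∂E with constant c > 0, i.e. |B(x,r) ∩ E| ≥ c |B(x,r)| for all x ∈ ∂E and r ∈ (0,1]. Then there is a constant c' > 0, depending only on c and d, such that |B(x,r) ∩ E| ≥ c' |B(x,r)| for all x ∈ E and r ∈ (0,1]. -/
open MeasureTheory Metric ENNReal Set

lemma preconn_frontier {X : Type*} [TopologicalSpace X] {s E : Set X}
    (hs : IsPreconnected s) (h1 : (s ∩ E).Nonempty) (h2 : (s \ E).Nonempty) :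
    (s ∩ frontier E).Nonempty := by
  by_contra h
  rw [Set.not_nonempty_iff_eq_empty] at h
  obtain ⟨x, hxs, hxE⟩ := h1
  obtain ⟨w, hws, hwE⟩ := h2
  have key := hs (interior E) (closure E)ᶜ isOpen_interior isClosed_closure.isOpen_compl
    (fun y hy => by
      by_cases hy' : y ∈ closure E
      · left
        by_contra hint
        exact absurd h (Set.nonempty_iff_ne_empty.mp ⟨y, hy, hy', hint⟩)
      · right; exact hy')
    ⟨x, hxs, by
      by_contra hint
      exact absurd h (Set.nonempty_iff_ne_empty.mp ⟨x, hxs, subset_closure hxE, hint⟩)⟩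
    ⟨w, hws, fun hcl => absurd h (Set.nonempty_iff_ne_empty.mp ⟨w, hws, hcl, fun hi => hwE (interior_subset hi)⟩)⟩
  obtain ⟨y, _, hyi, hyc⟩ := key
  exact hyc (subset_closure (interior_subset hyi))

/-- If `E ⊆ ℝ^d` satisfies the interior thickness condition in `∂E`
with constant `c > 0`, then it satisfies the interior thickness condition (balls
centered in `E`) with a constant `c' > 0` depending only on `c` and `d`. -/
theorem itc_in_boundary_implies_itc (d : ℕ) (hd : 1 ≤ d) (c : ℝ) (hc : 0 < c) :
    ∃ c' : ℝ, 0 < c' ∧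
      ∀ E : Set (EuclideanSpace ℝ (Fin d)),
        (∀ x ∈ frontier E, ∀ r : ℝ, 0 < r → r ≤ 1 →
          ENNReal.ofReal c * volume (Metric.ball x r) ≤ volume (Metric.ball x r ∩ E)) →
        ∀ x ∈ E, ∀ r : ℝ, 0 < r → r ≤ 1 →
          ENNReal.ofReal c' * volume (Metric.ball x r) ≤ volume (Metric.ball x r ∩ E) := by
  have : Nontrivial (EuclideanSpace ℝ (Fin d)) :=
    Module.nontrivial_of_finrank_pos (R := ℝ)
      (by rw [finrank_euclideanSpace, Fintype.card_fin]; omega)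
  refine ⟨min c 1 / 2 ^ d, by positivity, fun E hE x hx r hr hr1 => ?_⟩
  have hball : ∀ (z : EuclideanSpace ℝ (Fin d)) (s : ℝ), 0 ≤ s →
      volume (ball z s) = ENNReal.ofReal (s ^ d) * volume (ball (0 : EuclideanSpace ℝ (Fin d)) 1) := by
    intro z s hs
    rw [Measure.addHaar_ball volume z hs, finrank_euclideanSpace, Fintype.card_fin]
  have hr2 : (0:ℝ) < r / 2 := by linarith
  by_cases hsub : ball x (r / 2) ⊆ E
  · -- ball x (r/2) ⊆ ball x r ∩ E
    calc ENNReal.ofReal (min c 1 / 2 ^ d) * volume (ball x r)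
        = ENNReal.ofReal (min c 1 / 2 ^ d) * (ENNReal.ofReal (r ^ d) * volume (ball (0:EuclideanSpace ℝ (Fin d)) 1)) := by
          rw [hball x r hr.le]
      _ ≤ ENNReal.ofReal ((r/2) ^ d) * volume (ball (0:EuclideanSpace ℝ (Fin d)) 1) := by
          rw [← mul_assoc, ← ENNReal.ofReal_mul (by positivity)]
          apply mul_le_mul_left
          apply ENNReal.ofReal_le_ofReal
          have h1 : min c 1 ≤ 1 := min_le_right _ _
          have : (r/2)^d = r^d / 2^d := div_pow r 2 d
          rw [this]
          rw [div_mul_eq_mul_div, div_le_div_iff₀ (by positivity) (by positivity)]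
          nlinarith [pow_pos hr d, min_le_right c 1, pow_pos (by norm_num : (0:ℝ) < 2) d,
            mul_le_of_le_one_left (pow_pos hr d).le h1]
      _ = volume (ball x (r/2)) := (hball x (r/2) hr2.le).symm
      _ ≤ volume (ball x r ∩ E) := by
          apply measure_mono
          intro y hy
          exact ⟨ball_subset_ball (by linarith) hy, hsub hy⟩
  · -- frontier point in ball x (r/2)
    obtain ⟨w, hw, hwE⟩ := Set.not_subset.mp hsub
    obtain ⟨z, hzb, hzf⟩ := preconn_frontier (convex_ball x (r/2)).isPreconnected
      ⟨x, mem_ball_self hr2, hx⟩ ⟨w, hw, hwE⟩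
    have hsub2 : ball z (r/2) ⊆ ball x r := by
      intro y hy
      have := mem_ball.mp hy
      have := mem_ball.mp hzb
      rw [mem_ball]
      calc dist y x ≤ dist y z + dist z x := dist_triangle _ _ _
        _ < r/2 + r/2 := by linarith
        _ = r := by ring
    calc ENNReal.ofReal (min c 1 / 2 ^ d) * volume (ball x r)
        = ENNReal.ofReal (min c 1 / 2 ^ d) * (ENNReal.ofReal (r ^ d) * volume (ball (0:EuclideanSpace ℝ (Fin d)) 1)) := by
          rw [hball x r hr.le]
      _ ≤ ENNReal.ofReal c * (ENNReal.ofReal ((r/2) ^ d) * volume (ball (0:EuclideanSpace ℝ (Fin d)) 1)) := by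
          rw [← mul_assoc, ← mul_assoc, ← ENNReal.ofReal_mul (by positivity),
            ← ENNReal.ofReal_mul hc.le]
          apply mul_le_mul_left
          apply ENNReal.ofReal_le_ofReal
          have h1 : min c 1 ≤ c := min_le_left _ _
          have hdp : (r/2)^d = r^d / 2^d := div_pow r 2 d
          rw [hdp, div_mul_eq_mul_div, mul_div_assoc]
          gcongr
      _ = ENNReal.ofReal c * volume (ball z (r/2)) := by rw [hball z (r/2) hr2.le]
      _ ≤ volume (ball z (r/2) ∩ E) := hE z hzf (r/2) hr2 (by linarith)
      _ ≤ volume (ball x r ∩ E) := measure_mono (fun y hy => ⟨hsub2 hy.1, hy.2⟩)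
end

section
/- Let O = {(x,y) ∈ ℝ² : |y| < x² and x < 0} ∪ {(x,y) ∈ ℝ² : x > 0} and let N = ({0} × ℝ) \ {(0,0)}. Then for every δ > 0 and every c > 0 there exist z ∈ O and r ∈ (0,1] with dist(z,N) < δ and |B(z,r) ∩ O| < c |B(z,r)|. In particular, for no δ > 0 does O satisfy the interior thickness estimate uniformly at all points of O within distance δ of N. -/
open MeasureTheory Metric ENNReal

/-- For `O` the right half-plane with the attached cusp
`{|y| < x², x < 0}` in `ℝ²` and `N` the `y`-axis minus the origin: for every `δ > 0` and
every `c > 0` there are a point `z ∈ O` with `dist(z,N) < δ` and a radius `r ∈ (0,1]`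
such that `|B(z,r) ∩ O| < c |B(z,r)|`. Hence `O` is not uniformly interior thick in any
neighborhood of `N`. -/
theorem cusp_halfplane_not_thick_near_N :
    ∀ δ : ℝ, 0 < δ → ∀ c : ℝ, 0 < c →
      ∃ z ∈ {z : EuclideanSpace ℝ (Fin 2) | (|z 1| < (z 0) ^ 2 ∧ z 0 < 0) ∨ 0 < z 0},
        ∃ r : ℝ, 0 < r ∧ r ≤ 1 ∧
          Metric.infDist z {z : EuclideanSpace ℝ (Fin 2) | z 0 = 0 ∧ z ≠ 0} < δ ∧
          volume (Metric.ball z r ∩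
              ({z : EuclideanSpace ℝ (Fin 2) | (|z 1| < (z 0) ^ 2 ∧ z 0 < 0) ∨ 0 < z 0})) <
            ENNReal.ofReal c * volume (Metric.ball z r) := by
  intro δ hδ c hc
  have hπ := Real.pi_pos
  set ε : ℝ := min (δ / 2) (min 1 (c * Real.pi / 32)) with hεdef
  have hε : 0 < ε := by positivity
  have hεδ : ε ≤ δ / 2 := min_le_left _ _
  have hε1 : ε ≤ 1 := le_trans (min_le_right _ _) (min_le_left _ _)
  have hεc : ε ≤ c * Real.pi / 32 := le_trans (min_le_right _ _) (min_le_right _ _)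
  set z : EuclideanSpace ℝ (Fin 2) := WithLp.toLp 2 (fun i => if i = 0 then -ε else 0) with hz
  have hz0 : z 0 = -ε := rfl
  have hz1 : z 1 = 0 := rfl
  refine ⟨z, Or.inl ⟨by rw [hz0, hz1]; simpa using by positivity, by rw [hz0]; linarith⟩,
    ε, hε, hε1, ?_, ?_⟩
  · -- infDist bound
    set p : EuclideanSpace ℝ (Fin 2) := WithLp.toLp 2 (fun i => if i = 0 then 0 else δ / 2) with hp
    have hpmem : p ∈ {z : EuclideanSpace ℝ (Fin 2) | z 0 = 0 ∧ z ≠ 0} := by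
      refine ⟨rfl, ?_⟩
      intro h
      have : p 1 = 0 := by rw [h]; rfl
      simp only [hp] at this
      norm_num at this
      linarith
    refine lt_of_le_of_lt (Metric.infDist_le_dist_of_mem hpmem) ?_
    have e1 : z 0 - p 0 = -ε := by simp [hz, hp]
    have e2 : z 1 - p 1 = -(δ/2) := by simp [hz, hp]
    rw [EuclideanSpace.dist_eq, Fin.sum_univ_two, Real.sqrt_lt' hδ]
    simp only [Real.dist_eq, sq_abs]
    rw [e1, e2]
    nlinarith
  · -- volume estimate
    set T : Set (Fin 2 → ℝ) := Set.univ.pi (fun i =>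
      if i = 0 then Set.Ioo (-(2*ε)) 0 else Set.Ioo (-(4*ε^2)) (4*ε^2)) with hT
    have hTmeas : MeasurableSet T := MeasurableSet.univ_pi (fun i => by
      by_cases h : i = 0 <;> simp [h, measurableSet_Ioo])
    have hTvol : volume T = ENNReal.ofReal (2*ε) * ENNReal.ofReal (8*ε^2) := by
      rw [hT, volume_pi_pi, Fin.prod_univ_two]
      simp only [reduceIte, one_ne_zero]
      rw [Real.volume_Ioo, Real.volume_Ioo]
      norm_num
      ring_nf
      rw [ENNReal.ofReal_mul (by positivity), ENNReal.ofReal_ofNat]; ring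
    set S : Set (EuclideanSpace ℝ (Fin 2)) :=
      (MeasurableEquiv.toLp 2 (Fin 2 → ℝ)).symm ⁻¹' T with hS
    have hSvol : volume S = ENNReal.ofReal (2*ε) * ENNReal.ofReal (8*ε^2) := by
      rw [hS, (EuclideanSpace.volume_preserving_symm_measurableEquiv_toLp (Fin 2)).measure_preimage
        hTmeas.nullMeasurableSet, hTvol]
    have hsub : Metric.ball z ε ∩
        {z : EuclideanSpace ℝ (Fin 2) | (|z 1| < (z 0) ^ 2 ∧ z 0 < 0) ∨ 0 < z 0} ⊆ S := by
      rintro w ⟨hwball, hwO⟩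
      have hd : dist w z < ε := Metric.mem_ball.mp hwball
      have key0 : |w 0 - z 0| < ε := by
        refine lt_of_le_of_lt ?_ hd
        rw [EuclideanSpace.dist_eq, Fin.sum_univ_two, Real.le_sqrt (abs_nonneg _)]
        simp only [Real.dist_eq, sq_abs]
        nlinarith [sq_nonneg (w 1 - z 1)]
        positivity
      have key1 : |w 1 - z 1| < ε := by
        refine lt_of_le_of_lt ?_ hd
        rw [EuclideanSpace.dist_eq, Fin.sum_univ_two, Real.le_sqrt (abs_nonneg _)]
        simp only [Real.dist_eq, sq_abs]
        nlinarith [sq_nonneg (w 0 - z 0)]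
        positivity
      have h0 := key0
      rw [hz0, abs_lt] at h0
      have hw0 : w 0 < 0 := by linarith [h0.2]
      have hw0' : -(2*ε) < w 0 := by linarith [h0.1]
      have hleft : |w 1| < (w 0)^2 ∧ w 0 < 0 := by
        rcases hwO with h | h
        · exact h
        · linarith
      have hw1 : |w 1| < 4*ε^2 := by
        refine lt_of_lt_of_le hleft.1 ?_
        nlinarith [abs_nonneg (w 1)]
      rw [abs_lt] at hw1
      intro i _
      fin_cases i
      · simpa using ⟨hw0', hw0⟩
      · simpa using ⟨hw1.1, hw1.2⟩
    calc volume (Metric.ball z ε ∩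
            {z : EuclideanSpace ℝ (Fin 2) | (|z 1| < (z 0) ^ 2 ∧ z 0 < 0) ∨ 0 < z 0})
        ≤ volume S := measure_mono hsub
      _ = ENNReal.ofReal (2*ε) * ENNReal.ofReal (8*ε^2) := hSvol
      _ = ENNReal.ofReal (16*ε^3) := by
          rw [← ENNReal.ofReal_mul (by positivity)]; ring_nf
      _ < ENNReal.ofReal c * volume (Metric.ball z ε) := by
          rw [EuclideanSpace.volume_ball]
          simp only [Fintype.card_fin]
          rw [show ((2:ℕ):ℝ)/2 + 1 = 2 by norm_num, Real.Gamma_two,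
            Real.sq_sqrt Real.pi_pos.le, div_one, ← ENNReal.ofReal_pow hε.le,
            ← ENNReal.ofReal_mul (show (0:ℝ) ≤ ε^2 by positivity),
            ← ENNReal.ofReal_mul hc.le]
          rw [ENNReal.ofReal_lt_ofReal_iff (by positivity)]
          nlinarith [mul_le_mul_of_nonneg_right hεc (sq_nonneg ε), mul_pos (mul_pos hc hπ) (pow_pos hε 2)]
end

section
/- Let d ≥ 1, let O ⊆ ℝ^d be open, D ⊆ ∂O, N = ∂O \ D. Let (Q_j)_j be a countable, pairwise disjoint family of open axis-parallel cubes in ℝ^d with ⋃_j cl(Q_j) = ℝ^d \ cl(N) and diam(Q_j) ≤ dist(Q_j, N) ≤ 4 diam(Q_j) for every j. Set Σ = {Q_j : cl(Q_j) ∩ cl(O) ≠ ∅} and 𝑶 = O ∪ ⋃_{Q ∈ Σ} (Q \ D). Then 𝑶 is open, O ⊆ 𝑶, and ∂O ⊆ ∂𝑶. -/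
open MeasureTheory Metric ENNReal

/-- An open axis-parallel cube in `ℝ^d`. -/
def IsOpenCube (d : ℕ) (Q : Set (EuclideanSpace ℝ (Fin d))) : Prop :=
  ∃ (a : EuclideanSpace ℝ (Fin d)) (ℓ : ℝ), 0 < ℓ ∧
    Q = {x : EuclideanSpace ℝ (Fin d) | ∀ i, x i ∈ Set.Ioo (a i) (a i + ℓ)}

/-- The (extended) distance `dist(A,B) = inf {edist y z : y ∈ A, z ∈ B}` between two
sets; it equals `∞` if either set is empty. -/
noncomputable def setEDist (d : ℕ) (A B : Set (EuclideanSpace ℝ (Fin d))) : ℝ≥0∞ :=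
  ⨅ x ∈ A, EMetric.infEdist x B

lemma IsOpenCube.isOpen {d : ℕ} {Q : Set (EuclideanSpace ℝ (Fin d))}
    (h : IsOpenCube d Q) : IsOpen Q := by
  obtain ⟨a, ℓ, hℓ, rfl⟩ := h
  have : {x : EuclideanSpace ℝ (Fin d) | ∀ i, x i ∈ Set.Ioo (a i) (a i + ℓ)} =
      ⋂ i, (fun x : EuclideanSpace ℝ (Fin d) => x i) ⁻¹' Set.Ioo (a i) (a i + ℓ) := by
    ext x; simp
  rw [this]
  exact isOpen_iInter_of_finite fun i =>
    isOpen_Ioo.preimage (EuclideanSpace.proj i).continuous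

/-- Let `O ⊆ ℝ^d` be open, `D ⊆ ∂O`, `N = ∂O \ D`, and let `(Q_j)` be a
countable pairwise disjoint family of open axis-parallel cubes with
`⋃ cl(Q_j) = ℝ^d \ cl(N)` and `diam Q_j ≤ dist(Q_j,N) ≤ 4 diam Q_j`. With
`Σ = {Q_j : cl(Q_j) ∩ cl(O) ≠ ∅}` and `𝑶 = O ∪ ⋃_{Q ∈ Σ} (Q \ D)`, the set `𝑶` is open,
contains `O`, and `∂O ⊆ ∂𝑶`. -/
theorem fattened_set_basic_properties (d : ℕ) (hd : 1 ≤ d)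
    (O D N : Set (EuclideanSpace ℝ (Fin d))) (hO : IsOpen O) (hD : D ⊆ frontier O)
    (hN : N = frontier O \ D)
    (ι : Type) [Countable ι] (Q : ι → Set (EuclideanSpace ℝ (Fin d)))
    (hcube : ∀ j, IsOpenCube d (Q j))
    (hdisj : Pairwise (Function.onFun Disjoint Q))
    (hcover : (⋃ j, closure (Q j)) = (closure N)ᶜ)
    (hwhitney : ∀ j, EMetric.diam (Q j) ≤ setEDist d (Q j) N ∧
      setEDist d (Q j) N ≤ 4 * EMetric.diam (Q j)) :
    IsOpen (O ∪ ⋃ j ∈ {j | (closure (Q j) ∩ closure O).Nonempty}, (Q j \ D)) ∧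
    O ⊆ O ∪ ⋃ j ∈ {j | (closure (Q j) ∩ closure O).Nonempty}, (Q j \ D) ∧
    frontier O ⊆
      frontier (O ∪ ⋃ j ∈ {j | (closure (Q j) ∩ closure O).Nonempty}, (Q j \ D)) := by
  set U := O ∪ ⋃ j ∈ {j | (closure (Q j) ∩ closure O).Nonempty}, (Q j \ D) with hU
  -- each cube avoids the closure of N
  have hQN : ∀ j, Disjoint (Q j) (closure N) := fun j => by
    have h1 : Q j ⊆ (closure N)ᶜ := by
      rw [← hcover]
      exact subset_closure.trans (Set.subset_iUnion (fun j => closure (Q j)) j)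
    exact Set.disjoint_left.2 fun x hx hx' => (h1 hx) hx'
  -- on each cube, D coincides with frontier O
  have hQD : ∀ j, Q j \ D = Q j \ frontier O := fun j => by
    ext x
    simp only [Set.mem_diff]
    constructor
    · rintro ⟨hx, hxD⟩
      refine ⟨hx, fun hxf => ?_⟩
      have hxN : x ∈ N := hN ▸ ⟨hxf, hxD⟩
      exact (hQN j).le_bot ⟨hx, subset_closure hxN⟩
    · rintro ⟨hx, hxf⟩
      exact ⟨hx, fun hxD => hxf (hD hxD)⟩
  have hUopen : IsOpen U := by
    refine hO.union (isOpen_biUnion fun j _ => ?_)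
    rw [hQD j]
    exact (hcube j).isOpen.sdiff isClosed_frontier
  refine ⟨hUopen, Set.subset_union_left, fun x hx => ?_⟩
  rw [hUopen.frontier_eq]
  have hxO : x ∉ O := by
    rw [hO.frontier_eq] at hx; exact hx.2
  have hxU : x ∉ U := by
    rintro (h | h)
    · exact hxO h
    · simp only [Set.mem_iUnion] at h
      obtain ⟨j, -, hxj⟩ := h
      rw [hQD j] at hxj
      exact hxj.2 hx
  exact ⟨closure_mono Set.subset_union_left (frontier_subset_closure hx), hxU⟩
end

section
/- Let d ≥ 1, let O ⊆ ℝ^d be open, D ⊆ ∂O, N = ∂O \ D. Let (Q_j)_j be a countable, pairwise disjoint family of open axis-parallel cubes in ℝ^d with ⋃_j cl(Q_j) = ℝ^d \ cl(N) and diam(Q_j) ≤ dist(Q_j, N) ≤ 4 diam(Q_j) for every j. Set Σ = {Q_j : cl(Q_j) ∩ cl(O) ≠ ∅} and 𝑶 = O ∪ ⋃_{Q ∈ Σ} (Q \ D). Then for every x ∈ O and every y ∈ 𝑶 \ O one has |x − y| ≥ (1/2) dist(x, D). -/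
open MeasureTheory Metric ENNReal

/-- A preconnected set meeting the interior of `t` and the complement of its closure
meets the frontier of `t`. -/
lemma preconnected_inter_frontier_nonempty {X : Type*} [TopologicalSpace X] {s t : Set X}
    (hs : IsPreconnected s) (h1 : (s ∩ interior t).Nonempty)
    (h2 : (s ∩ (closure t)ᶜ).Nonempty) : (s ∩ frontier t).Nonempty := by
  by_contra h
  rw [Set.not_nonempty_iff_eq_empty] at h
  have hsub : s ⊆ interior t ∪ (closure t)ᶜ := by
    intro p hp
    by_cases hpc : p ∈ closure t
    · rw [closure_eq_interior_union_frontier] at hpc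
      rcases hpc with hpi | hpf
      · exact Or.inl hpi
      · exact absurd (Set.mem_inter hp hpf) (by rw [h]; exact Set.notMem_empty p)
    · exact Or.inr hpc
  obtain ⟨p, _, hpi, hpc⟩ := hs _ _ isOpen_interior isClosed_closure.isOpen_compl hsub h1 h2
  exact hpc (subset_closure (interior_subset hpi))

/-- Points of a segment are within `dist x y` of each endpoint. -/
lemma dist_le_of_mem_segment {E : Type*} [NormedAddCommGroup E] [NormedSpace ℝ E]
    {x y z : E} (hz : z ∈ segment ℝ x y) : dist z x ≤ dist x y ∧ dist z y ≤ dist x y := by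
  constructor
  · have := (convex_closedBall x (dist x y)).segment_subset
      (Metric.mem_closedBall.2 (by simp [dist_nonneg])) (Metric.mem_closedBall.2 (by rw [dist_comm])) hz
    exact Metric.mem_closedBall.1 this
  · have := (convex_closedBall y (dist x y)).segment_subset
      (Metric.mem_closedBall.2 le_rfl) (Metric.mem_closedBall.2 (by simp [dist_nonneg])) hz
    exact Metric.mem_closedBall.1 this

/-- An open axis-parallel cube is convex. -/
lemma IsOpenCube.convex {d : ℕ} {Q : Set (EuclideanSpace ℝ (Fin d))}
    (hQ : IsOpenCube d Q) : Convex ℝ Q := by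
  obtain ⟨a, ℓ, -, rfl⟩ := hQ
  intro p hp q hq s t hs ht hst
  intro i
  have : (s • p + t • q) i = s * p i + t * q i := by
    simp [PiLp.add_apply, PiLp.smul_apply, smul_eq_mul]
  rw [this]
  exact convex_Ioo (a i) (a i + ℓ) (hp i) (hq i) hs ht hst

/-- In the fattening construction, points added to `O` stay far from
`O` relative to the distance to `D`: for `x ∈ O` and `y ∈ 𝑶 \ O` one has
`|x − y| ≥ (1/2) dist(x,D)`. -/
theorem dist_to_added_points (d : ℕ) (hd : 1 ≤ d)
    (O D N : Set (EuclideanSpace ℝ (Fin d))) (hO : IsOpen O) (hD : D ⊆ frontier O)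
    (hN : N = frontier O \ D)
    (ι : Type) [Countable ι] (Q : ι → Set (EuclideanSpace ℝ (Fin d)))
    (hcube : ∀ j, IsOpenCube d (Q j))
    (hdisj : Pairwise (Function.onFun Disjoint Q))
    (hcover : (⋃ j, closure (Q j)) = (closure N)ᶜ)
    (hwhitney : ∀ j, EMetric.diam (Q j) ≤ setEDist d (Q j) N ∧
      setEDist d (Q j) N ≤ 4 * EMetric.diam (Q j)) :
    ∀ x ∈ O,
      ∀ y ∈ (O ∪ ⋃ j ∈ {j | (closure (Q j) ∩ closure O).Nonempty}, (Q j \ D)) \ O,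
        (1 / 2) * Metric.infDist x D ≤ dist x y := by
  intro x hx y hy
  obtain ⟨hy', hyO⟩ := hy
  rcases hy' with hyO' | hy'
  · exact absurd hyO' hyO
  simp only [Set.mem_iUnion, Set.mem_setOf_eq] at hy'
  obtain ⟨j, hj, hyQ, hyD⟩ := hy'
  have hclQ : closure (Q j) ⊆ (closure N)ᶜ := by
    rw [← hcover]; exact Set.subset_iUnion (fun j => closure (Q j)) j
  have hyN : y ∉ closure N := hclQ (subset_closure hyQ)
  have hfr : frontier O = D ∪ N := by rw [hN, Set.union_diff_cancel hD]
  have hyclO : y ∉ closure O := by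
    intro h
    have hfy : y ∈ frontier O := by
      rw [frontier, hO.interior_eq]; exact ⟨h, hyO⟩
    rw [hfr] at hfy
    rcases hfy with h' | h'
    · exact hyD h'
    · exact hyN (subset_closure h')
  -- the segment [x,y] meets the frontier of O
  obtain ⟨z, hzseg, hzfr⟩ : (segment ℝ x y ∩ frontier O).Nonempty := by
    apply preconnected_inter_frontier_nonempty (convex_segment x y).isPreconnected
    · exact ⟨x, left_mem_segment ℝ x y, by rwa [hO.interior_eq]⟩
    · exact ⟨y, right_mem_segment ℝ x y, hyclO⟩
  have hxz := dist_le_of_mem_segment hzseg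
  have h0 : 0 ≤ Metric.infDist x D := Metric.infDist_nonneg
  rw [hfr] at hzfr
  rcases hzfr with hzD | hzN
  · -- z ∈ D : easy case
    have h1 : Metric.infDist x D ≤ dist x z := Metric.infDist_le_dist_of_mem hzD
    rw [dist_comm x z] at h1
    nlinarith [hxz.1]
  · -- z ∈ N
    obtain ⟨w, hwQ, hwO⟩ := hj
    -- second segment from w to y
    obtain ⟨z', hz'seg, hz'fr⟩ : (segment ℝ w y ∩ frontier O).Nonempty := by
      rcases (closure_eq_interior_union_frontier O ▸ hwO) with hwi | hwf
      · apply preconnected_inter_frontier_nonempty (convex_segment w y).isPreconnected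
        · exact ⟨w, left_mem_segment ℝ w y, hwi⟩
        · exact ⟨y, right_mem_segment ℝ w y, hyclO⟩
      · exact ⟨w, left_mem_segment ℝ w y, hwf⟩
    have hz'Q : z' ∈ closure (Q j) :=
      (hcube j).convex.closure.segment_subset hwQ (subset_closure hyQ) hz'seg
    have hz'D : z' ∈ D := by
      rw [hfr] at hz'fr
      rcases hz'fr with h' | h'
      · exact h'
      · exact absurd (subset_closure h') (fun hc => hclQ hz'Q hc)
    -- edist chain
    have e1 : EMetric.diam (Q j) ≤ EMetric.infEdist y N :=
      le_trans (hwhitney j).1 (iInf₂_le y hyQ)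
    have e2 : EMetric.infEdist y N ≤ edist y z := EMetric.infEdist_le_edist_of_mem hzN
    have e3 : edist y z ≤ edist x y := by
      rw [edist_dist, edist_dist]
      exact ENNReal.ofReal_le_ofReal (by rw [dist_comm y z]; exact hxz.2)
    have e4 : edist y z' ≤ EMetric.diam (Q j) := by
      show edist y z' ≤ Metric.ediam (Q j)
      rw [← EMetric.diam_closure]
      exact EMetric.edist_le_diam_of_mem (subset_closure hyQ) hz'Q
    have e5 : edist y z' ≤ edist x y := e4.trans (e1.trans (e2.trans e3))
    have hd' : dist y z' ≤ dist x y := by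
      rw [edist_dist, edist_dist] at e5
      exact (ENNReal.ofReal_le_ofReal_iff dist_nonneg).1 e5
    have h1 : Metric.infDist x D ≤ dist x z' := Metric.infDist_le_dist_of_mem hz'D
    have h2 : dist x z' ≤ dist x y + dist y z' := dist_triangle x y z'
    linarith
end

section
/- Let d ≥ 1, p ∈ (0,∞), s ∈ (0,1), let O ⊆ U ⊆ ℝ^d be measurable sets, let D ⊆ ℝ^d be nonempty, and let κ > 0 be such that |x − y| ≥ κ dist(x,D) for all x ∈ O and y ∈ U \ O. Let f : O → ℝ be measurable and let f₀ : U → ℝ be its extension by zero (f₀ = f on O, f₀ = 0 on U \ O). Then there is a constant C > 0, depending only on d, s, p and κ, such that ∬_{x,y ∈ U, |x−y|<1} |f₀(x) − f₀(y)|^p / |x−y|^{sp+d} dy dx ≤ ∬_{x,y ∈ O, |x−y|<1} |f(x) − f(y)|^p / |x−y|^{sp+d} dy dx + C ∫_O |f(x)|^p dist(x,D)^{-sp} dx. -/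
open MeasureTheory Metric ENNReal

/-- The `p`-th power of the fractional Sobolev seminorm `[f]_{W^{s,p}(U)}`. -/
noncomputable def gagliardoPow (d : ℕ) (s p : ℝ) (U : Set (EuclideanSpace ℝ (Fin d)))
    (f : EuclideanSpace ℝ (Fin d) → ℝ) : ℝ≥0∞ :=
  ∫⁻ x in U, ∫⁻ y in U ∩ {y | dist x y < 1},
    ENNReal.ofReal (|f x - f y| ^ p / dist x y ^ (s * p + d))

/-- The fractional Hardy term `∫_U |f(x)|^p dist(x,D)^{-sp} dx`, with the convention
`0^{-sp} = ∞` taken in `ℝ≥0∞`. -/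
noncomputable def hardyPow (d : ℕ) (s p : ℝ) (U D : Set (EuclideanSpace ℝ (Fin d)))
    (f : EuclideanSpace ℝ (Fin d) → ℝ) : ℝ≥0∞ :=
  ∫⁻ x in U, ENNReal.ofReal (|f x| ^ p) * ENNReal.ofReal (Metric.infDist x D) ^ (-(s * p))

open Set


lemma key_lemma (d : ℕ) (hd : 1 ≤ d) (q : ℝ) (hq : 0 < q) :
    ∃ C : ℝ, 0 < C ∧ ∀ (x : EuclideanSpace ℝ (Fin d)) (R : ℝ), 0 < R →
      ∫⁻ y in {y | R ≤ dist x y}, ENNReal.ofReal (dist x y ^ (-(q + d)))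
        ≤ ENNReal.ofReal C * ENNReal.ofReal (R ^ (-q)) := by
  haveI : Nontrivial (EuclideanSpace ℝ (Fin d)) := by
    have hne : Nonempty (Fin d) := ⟨⟨0, hd⟩⟩
    exact ⟨0, EuclideanSpace.single hne.some 1, by
      intro h
      have := congrArg (fun g : EuclideanSpace ℝ (Fin d) => g hne.some) h
      simp at this⟩
  have hd0 : (0:ℝ) < d := by exact_mod_cast hd
  set a : ℝ := q + d with ha_def
  have ha : 0 < a := by positivity
  have hda : (d : ℝ) < a := by simp only [ha_def]; linarith
  set V : ℝ≥0∞ := volume (ball (0 : EuclideanSpace ℝ (Fin d)) 1) with hV_def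
  have hVne : V ≠ ∞ := measure_ball_lt_top.ne
  have hVpos : 0 < V := measure_ball_pos _ _ one_pos
  set r : ℝ := -((d : ℝ) / a) with hr_def
  have hr1 : -1 < r := by
    rw [hr_def, neg_lt, neg_neg, div_lt_one ha]; exact hda
  have hr0 : r < 0 := by
    rw [hr_def, neg_lt_zero]; positivity
  have hrq : r + 1 = q / a := by
    rw [hr_def, ha_def]; field_simp; ring
  have hVt : 0 < V.toReal := ENNReal.toReal_pos hVpos.ne' hVne
  refine ⟨V.toReal * (a / q), by positivity, ?_⟩
  intro x R hR
  set S : Set (EuclideanSpace ℝ (Fin d)) := {y | R ≤ dist x y} with hS_def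
  have hdist_m : Measurable (fun y : EuclideanSpace ℝ (Fin d) => dist x y) :=
    measurable_const.dist measurable_id
  have hg_mble : Measurable (fun y : EuclideanSpace ℝ (Fin d) => dist x y ^ (-a)) := by
    fun_prop
  -- layer cake
  rw [lintegral_eq_lintegral_meas_lt _
    (Filter.Eventually.of_forall (fun y => Real.rpow_nonneg dist_nonneg _)) hg_mble.aemeasurable]
  set T : ℝ := R ^ (-a) with hT_def
  have hT : 0 < T := Real.rpow_pos_of_pos hR _
  have step : ∀ t ∈ Ioi (0:ℝ),
      (volume.restrict S) {y | t < dist x y ^ (-a)}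
        ≤ (Ioo (0:ℝ) T).indicator (fun t => ENNReal.ofReal (t ^ r) * V) t := by
    intro t ht
    have htpos : (0:ℝ) < t := ht
    have hmeas : (volume.restrict S) {y | t < dist x y ^ (-a)}
        = volume ({y | t < dist x y ^ (-a)} ∩ S) := by
      rw [Measure.restrict_apply (measurableSet_lt measurable_const hg_mble)]
    by_cases htT : t < T
    · rw [indicator_of_mem (show t ∈ Ioo (0:ℝ) T from ⟨htpos, htT⟩), hmeas]
      set ρ : ℝ := t ^ (-(1/a)) with hρ_def
      have hρ : 0 ≤ ρ := (Real.rpow_pos_of_pos htpos _).le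
      have hsub : {y | t < dist x y ^ (-a)} ∩ S ⊆ ball x ρ := by
        rintro y ⟨hy1, hy2⟩
        have hdy : (0:ℝ) < dist x y := lt_of_lt_of_le hR hy2
        have h2 : (dist x y ^ (-a)) ^ (-(1/a)) = dist x y := by
          rw [← Real.rpow_mul dist_nonneg]
          rw [show -a * -(1/a) = a * (1/a) by ring, mul_one_div_cancel ha.ne', Real.rpow_one]
        have h3 : (dist x y ^ (-a)) ^ (-(1/a)) < ρ :=
          Real.rpow_lt_rpow_of_neg htpos hy1 (by simp only [neg_lt_zero]; positivity)
        rw [h2] at h3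
        simpa [mem_ball, dist_comm] using h3
      calc volume ({y | t < dist x y ^ (-a)} ∩ S) ≤ volume (ball x ρ) :=
            measure_mono hsub
        _ = ENNReal.ofReal (ρ ^ d) * V := by
            rw [hV_def, Measure.addHaar_ball volume x hρ, finrank_euclideanSpace_fin]
        _ = ENNReal.ofReal (t ^ r) * V := by
            congr 1
            rw [hρ_def, ← Real.rpow_natCast (t ^ (-(1/a))) d, ← Real.rpow_mul htpos.le]
            congr 2
            rw [hr_def]; field_simp
        _ ≤ ENNReal.ofReal (t ^ r) * V := le_rfl
    · rw [indicator_of_notMem (fun h => htT h.2), hmeas]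
      have hempty : {y | t < dist x y ^ (-a)} ∩ S = ∅ := by
        ext y
        simp only [mem_inter_iff, mem_setOf_eq, mem_empty_iff_false, iff_false, not_and]
        intro hy1 hy2
        have hle : dist x y ^ (-a) ≤ T := by
          rw [hT_def]
          exact Real.rpow_le_rpow_of_nonpos hR hy2 (by linarith)
        push_neg at htT
        exact absurd (lt_of_lt_of_le hy1 hle) (not_lt.mpr htT)
      rw [hempty]; simp
  calc ∫⁻ t in Ioi (0:ℝ), (volume.restrict S) {y | t < dist x y ^ (-a)}
      ≤ ∫⁻ t in Ioi (0:ℝ), (Ioo (0:ℝ) T).indicator (fun t => ENNReal.ofReal (t ^ r) * V) t := by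
        apply lintegral_mono_ae
        filter_upwards [ae_restrict_mem measurableSet_Ioi] with t ht using step t ht
    _ = ∫⁻ t in Ioo (0:ℝ) T, ENNReal.ofReal (t ^ r) * V := by
        rw [lintegral_indicator measurableSet_Ioo, Measure.restrict_restrict measurableSet_Ioo,
          inter_eq_left.mpr Ioo_subset_Ioi_self]
    _ = (∫⁻ t in Ioo (0:ℝ) T, ENNReal.ofReal (t ^ r)) * V :=
        lintegral_mul_const' V _ hVne
    _ = ENNReal.ofReal (∫ t in Ioo (0:ℝ) T, t ^ r) * V := by
        congr 1
        rw [← ofReal_integral_eq_lintegral_ofReal]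
        · have h1 : IntervalIntegrable (fun t : ℝ => t ^ r) volume 0 T :=
            intervalIntegral.intervalIntegrable_rpow' hr1
          rw [intervalIntegrable_iff, uIoc_of_le hT.le] at h1
          exact h1.mono_set Ioo_subset_Ioc_self
        · filter_upwards [ae_restrict_mem measurableSet_Ioo] with t ht
          exact Real.rpow_nonneg ht.1.le _
    _ = ENNReal.ofReal (T ^ (r+1) / (r+1)) * V := by
        congr 2
        rw [← MeasureTheory.integral_Ioc_eq_integral_Ioo,
          ← intervalIntegral.integral_of_le hT.le, integral_rpow (Or.inl hr1)]
        rw [Real.zero_rpow (by linarith : r + 1 ≠ 0)]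
        ring
    _ = ENNReal.ofReal (V.toReal * (a/q)) * ENNReal.ofReal (R ^ (-q)) := by
        have hreal : T ^ (r+1) / (r+1) = R^(-q) * (a/q) := by
          rw [hrq, hT_def, ← Real.rpow_mul hR.le]
          have h1 : -a * (q/a) = -q := by field_simp
          rw [h1, div_eq_mul_inv, inv_div]
        rw [hreal, ENNReal.ofReal_mul (Real.rpow_nonneg hR.le _),
          ENNReal.ofReal_mul (ENNReal.toReal_nonneg), ENNReal.ofReal_toReal hVne]
        ring

lemma pointwise_bound (d : ℕ) (hd : 1 ≤ d) (q p κ : ℝ) (hq : 0 < q) (hp : 0 < p) (hκ : 0 < κ) :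
    ∃ C : ℝ, 0 < C ∧ ∀ (W D : Set (EuclideanSpace ℝ (Fin d)))
      (z : EuclideanSpace ℝ (Fin d)) (c : ℝ),
      (∀ w ∈ W, κ * infDist z D ≤ dist z w) →
      ∫⁻ w in W ∩ {w | dist z w < 1}, ENNReal.ofReal (|c| ^ p / dist z w ^ (q + d))
        ≤ ENNReal.ofReal C * (ENNReal.ofReal (|c| ^ p) * ENNReal.ofReal (infDist z D) ^ (-q)) := by
  obtain ⟨C₁, hC₁, hkey⟩ := key_lemma d hd q hq
  refine ⟨C₁ * κ ^ (-q), by positivity, ?_⟩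
  intro W D z c hWd
  by_cases hc : c = 0
  · simp [hc, Real.zero_rpow hp.ne']
  have hδ0 : 0 ≤ infDist z D := infDist_nonneg
  rcases eq_or_lt_of_le hδ0 with hδ | hδ
  · -- infDist = 0 : RHS is ⊤
    have h1 : ENNReal.ofReal (infDist z D) ^ (-q) = ⊤ := by
      rw [← hδ, ENNReal.ofReal_zero, ENNReal.zero_rpow_of_neg (by linarith)]
    have h2 : ENNReal.ofReal (|c| ^ p) ≠ 0 := by
      rw [ne_eq, ENNReal.ofReal_eq_zero, not_le]
      exact Real.rpow_pos_of_pos (abs_pos.mpr hc) _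
    rw [h1, ENNReal.mul_top h2, ENNReal.mul_top (by
      rw [ne_eq, ENNReal.ofReal_eq_zero, not_le]; positivity)]
    exact le_top
  · set δ := infDist z D with hδ_def
    set R := κ * δ with hR_def
    have hR : 0 < R := by positivity
    have hsub : W ∩ {w | dist z w < 1} ⊆ {w | R ≤ dist z w} :=
      fun w hw => hWd w hw.1
    calc ∫⁻ w in W ∩ {w | dist z w < 1}, ENNReal.ofReal (|c| ^ p / dist z w ^ (q + d))
        ≤ ∫⁻ w in {w | R ≤ dist z w}, ENNReal.ofReal (|c| ^ p / dist z w ^ (q + d)) :=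
          lintegral_mono_set hsub
      _ = ∫⁻ w in {w | R ≤ dist z w},
            ENNReal.ofReal (|c| ^ p) * ENNReal.ofReal (dist z w ^ (-(q + d))) := by
          apply setLIntegral_congr_fun
            (measurableSet_le measurable_const (by fun_prop))
          intro w hw
          have hdw : (0:ℝ) < dist z w := lt_of_lt_of_le hR hw
          beta_reduce
          rw [Real.rpow_neg dist_nonneg, ← ENNReal.ofReal_mul (by positivity), div_eq_mul_inv]
      _ = ENNReal.ofReal (|c| ^ p) *
            ∫⁻ w in {w | R ≤ dist z w}, ENNReal.ofReal (dist z w ^ (-(q + d))) :=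
          lintegral_const_mul' _ _ ENNReal.ofReal_ne_top
      _ ≤ ENNReal.ofReal (|c| ^ p) * (ENNReal.ofReal C₁ * ENNReal.ofReal (R ^ (-q))) :=
          mul_le_mul_right (hkey z R hR) _
      _ = ENNReal.ofReal (C₁ * κ ^ (-q)) *
            (ENNReal.ofReal (|c| ^ p) * ENNReal.ofReal δ ^ (-q)) := by
          rw [hR_def, Real.mul_rpow hκ.le hδ0, ENNReal.ofReal_mul (by positivity),
            ENNReal.ofReal_rpow_of_pos hδ, ENNReal.ofReal_mul hC₁.le]
          ring

/-- If `O ⊆ U` and every point of `U \ O` is at distance at least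
`κ dist(x,D)` from each `x ∈ O`, then the zero extension `f₀ = 𝟙_O f` of a measurable
`f` satisfies `[f₀]_{W^{s,p}(U)}^p ≤ [f]_{W^{s,p}(O)}^p + C ∫_O |f|^p dist(·,D)^{-sp}`
with `C = C(d,s,p,κ)`. -/
theorem zero_extension_estimate (d : ℕ) (hd : 1 ≤ d) (s p κ : ℝ)
    (hs0 : 0 < s) (hs1 : s < 1) (hp : 0 < p) (hκ : 0 < κ) :
    ∃ C : ℝ, 0 < C ∧
      ∀ O U D : Set (EuclideanSpace ℝ (Fin d)),
        MeasurableSet O → MeasurableSet U → O ⊆ U → D.Nonempty →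
        (∀ x ∈ O, ∀ y ∈ U \ O, κ * Metric.infDist x D ≤ dist x y) →
        ∀ f : EuclideanSpace ℝ (Fin d) → ℝ, Measurable f →
          gagliardoPow d s p U (O.indicator f) ≤
            gagliardoPow d s p O f + ENNReal.ofReal C * hardyPow d s p O D f := by
  obtain ⟨C₀, hC₀, hbound⟩ := pointwise_bound d hd (s*p) p κ (mul_pos hs0 hp) hp hκ
  refine ⟨2*C₀, by positivity, ?_⟩
  intro O U D hO hU hOU hD hdist f hf
  set f₀ := O.indicator f with hf₀_def
  have hUO : MeasurableSet (U \ O) := hU.diff hO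
  have hdisj : Disjoint O (U \ O) := disjoint_sdiff_right
  have hBx : ∀ x : EuclideanSpace ℝ (Fin d), MeasurableSet {y : EuclideanSpace ℝ (Fin d) | dist x y < 1} :=
    fun x => measurableSet_lt (by fun_prop) measurable_const
  have hinfm : Measurable (fun x : EuclideanSpace ℝ (Fin d) => infDist x D) :=
    (continuous_infDist_pt D).measurable
  set bnd : EuclideanSpace ℝ (Fin d) → ℝ≥0∞ := fun x =>
    ENNReal.ofReal (|f x| ^ p) * ENNReal.ofReal (infDist x D) ^ (-(s*p)) with hbnd_def
  have hbnd_meas : Measurable bnd := by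
    apply Measurable.mul
    · fun_prop
    · exact (ENNReal.measurable_ofReal.comp hinfm).pow_const _
  have hint_bnd : ∫⁻ x in O, ENNReal.ofReal C₀ * bnd x
      = ENNReal.ofReal C₀ * hardyPow d s p O D f := by
    rw [lintegral_const_mul' _ _ ENNReal.ofReal_ne_top]; rfl
  set G : EuclideanSpace ℝ (Fin d) → EuclideanSpace ℝ (Fin d) → ℝ≥0∞ := fun x y =>
    ENNReal.ofReal (|f₀ x - f₀ y| ^ p / dist x y ^ (s * p + d)) with hG_def
  have hsplit : ∀ x : EuclideanSpace ℝ (Fin d),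
      U ∩ {y | dist x y < 1} = (O ∩ {y | dist x y < 1}) ∪ ((U \ O) ∩ {y | dist x y < 1}) := by
    intro x
    rw [← union_inter_distrib_right, union_diff_cancel hOU]
  -- Part A : integral over O
  have hA : ∫⁻ x in O, ∫⁻ y in U ∩ {y | dist x y < 1}, G x y
      ≤ gagliardoPow d s p O f + ENNReal.ofReal C₀ * hardyPow d s p O D f := by
    have step : ∀ x ∈ O, ∫⁻ y in U ∩ {y | dist x y < 1}, G x y
        ≤ (∫⁻ y in O ∩ {y | dist x y < 1},
            ENNReal.ofReal (|f x - f y| ^ p / dist x y ^ (s * p + d)))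
          + ENNReal.ofReal C₀ * bnd x := by
      intro x hx
      rw [hsplit x, lintegral_union (hUO.inter (hBx x))
        (hdisj.mono inter_subset_left inter_subset_left)]
      apply add_le_add
      · apply le_of_eq
        apply setLIntegral_congr_fun (hO.inter (hBx x))
        intro y hy
        rw [hG_def]
        simp only [hf₀_def, indicator_of_mem hx, indicator_of_mem hy.1]
      · have heq : ∫⁻ y in (U \ O) ∩ {y | dist x y < 1}, G x y
            = ∫⁻ y in (U \ O) ∩ {y | dist x y < 1},
                ENNReal.ofReal (|f x| ^ p / dist x y ^ (s * p + d)) := by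
          apply setLIntegral_congr_fun (hUO.inter (hBx x))
          intro y hy
          rw [hG_def]
          simp only [hf₀_def, indicator_of_mem hx, indicator_of_notMem hy.1.2, sub_zero]
        rw [heq]
        exact hbound (U\O) D x (f x) (fun w hw => hdist x hx w hw)
    calc ∫⁻ x in O, ∫⁻ y in U ∩ {y | dist x y < 1}, G x y
        ≤ ∫⁻ x in O, ((∫⁻ y in O ∩ {y | dist x y < 1},
            ENNReal.ofReal (|f x - f y| ^ p / dist x y ^ (s * p + d)))
          + ENNReal.ofReal C₀ * bnd x) := by
          apply lintegral_mono_ae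
          filter_upwards [ae_restrict_mem hO] with x hx using step x hx
      _ = (∫⁻ x in O, ∫⁻ y in O ∩ {y | dist x y < 1},
            ENNReal.ofReal (|f x - f y| ^ p / dist x y ^ (s * p + d)))
          + ∫⁻ x in O, ENNReal.ofReal C₀ * bnd x :=
          lintegral_add_right _ (by fun_prop)
      _ = gagliardoPow d s p O f + ENNReal.ofReal C₀ * hardyPow d s p O D f := by
          rw [hint_bnd]; rfl
  -- Part B : integral over U \ O
  set F : EuclideanSpace ℝ (Fin d) × EuclideanSpace ℝ (Fin d) → ℝ≥0∞ := fun w =>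
    ({w : EuclideanSpace ℝ (Fin d) × EuclideanSpace ℝ (Fin d) | dist w.1 w.2 < 1}).indicator
      (fun w => ENNReal.ofReal (|f w.2| ^ p / dist w.1 w.2 ^ (s * p + d))) w with hF_def
  have hFmeas : Measurable F := by
    apply Measurable.indicator
    · fun_prop
    · exact (isOpen_lt continuous_dist continuous_const).measurableSet
  have hB : ∫⁻ x in U \ O, ∫⁻ y in U ∩ {y | dist x y < 1}, G x y
      ≤ ENNReal.ofReal C₀ * hardyPow d s p O D f := by
    calc ∫⁻ x in U \ O, ∫⁻ y in U ∩ {y | dist x y < 1}, G x y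
        = ∫⁻ x in U \ O, ∫⁻ y in O, F (x, y) := by
          apply lintegral_congr_ae
          filter_upwards [ae_restrict_mem hUO] with x hx
          rw [hsplit x, lintegral_union (hUO.inter (hBx x))
            (hdisj.mono inter_subset_left inter_subset_left)]
          have h2 : ∫⁻ y in (U \ O) ∩ {y | dist x y < 1}, G x y = 0 := by
            rw [show (0:ℝ≥0∞) = ∫⁻ y in (U \ O) ∩ {y | dist x y < 1}, 0 by simp]
            apply setLIntegral_congr_fun (hUO.inter (hBx x))
            intro y hy
            rw [hG_def]
            simp only [hf₀_def, indicator_of_notMem hx.2, indicator_of_notMem hy.1.2,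
              sub_zero, abs_zero, Real.zero_rpow hp.ne', zero_div, ENNReal.ofReal_zero]
          rw [h2, add_zero]
          have h1 : ∫⁻ y in O ∩ {y | dist x y < 1}, G x y
              = ∫⁻ y in O ∩ {y | dist x y < 1},
                  ENNReal.ofReal (|f y| ^ p / dist x y ^ (s * p + d)) := by
            apply setLIntegral_congr_fun (hO.inter (hBx x))
            intro y hy
            rw [hG_def]
            simp only [hf₀_def, indicator_of_notMem hx.2, indicator_of_mem hy.1, zero_sub,
              abs_neg]
          rw [h1]
          have hFx : ∀ y, F (x, y) = ({y | dist x y < 1}).indicator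
              (fun y => ENNReal.ofReal (|f y| ^ p / dist x y ^ (s * p + d))) y := by
            intro y
            by_cases h : dist x y < 1 <;>
              simp [hF_def, indicator, h]
          rw [lintegral_congr hFx, lintegral_indicator (hBx x),
            Measure.restrict_restrict (hBx x), inter_comm]
      _ = ∫⁻ y in O, ∫⁻ x in U \ O, F (x, y) :=
          lintegral_lintegral_swap hFmeas.aemeasurable
      _ ≤ ∫⁻ y in O, ENNReal.ofReal C₀ * bnd y := by
          apply lintegral_mono_ae
          filter_upwards [ae_restrict_mem hO] with y hy
          have hFy : ∀ x, F (x, y) = ({x : EuclideanSpace ℝ (Fin d) | dist y x < 1}).indicator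
              (fun x => ENNReal.ofReal (|f y| ^ p / dist y x ^ (s * p + d))) x := by
            intro x
            by_cases h : dist y x < 1 <;>
              simp [hF_def, indicator, h, dist_comm]
          have hBy : MeasurableSet {x : EuclideanSpace ℝ (Fin d) | dist y x < 1} := hBx y
          rw [lintegral_congr hFy, lintegral_indicator hBy,
            Measure.restrict_restrict hBy, inter_comm]
          exact hbound (U\O) D y (f y) (fun w hw => hdist y hy w hw)
      _ = ENNReal.ofReal C₀ * hardyPow d s p O D f := hint_bnd
  -- combine
  calc gagliardoPow d s p U f₀
      = (∫⁻ x in O, ∫⁻ y in U ∩ {y | dist x y < 1}, G x y)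
        + ∫⁻ x in U \ O, ∫⁻ y in U ∩ {y | dist x y < 1}, G x y := by
        have h0 : gagliardoPow d s p U f₀
            = ∫⁻ x in O ∪ (U \ O), ∫⁻ y in U ∩ {y | dist x y < 1}, G x y := by
          rw [union_diff_cancel hOU]; rfl
        rw [h0, lintegral_union hUO hdisj]
    _ ≤ (gagliardoPow d s p O f + ENNReal.ofReal C₀ * hardyPow d s p O D f)
        + ENNReal.ofReal C₀ * hardyPow d s p O D f := add_le_add hA hB
    _ = gagliardoPow d s p O f + ENNReal.ofReal (2*C₀) * hardyPow d s p O D f := by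
        rw [add_assoc, ← two_mul, ← mul_assoc, ENNReal.ofReal_mul (by norm_num : (0:ℝ) ≤ 2),
          ENNReal.ofReal_ofNat]
end
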